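/- Fix a dyadic cube Q_0 ⊆ ℝ^r, a finite index set E, exponents d_e ≥ 1, and nonnegative locally integrable functions F_e on ℝ^r. Set M = log₂(2|E|)/min_{e∈E} d_e and define for each e ∈ E the family ℐ_{Q_0}^e of dyadic subcubes Q ⊆ Q_0 with [F_e^{d_e}]_Q^{1/d_e} > 2^M [F_e^{d_e}]_{Q_0}^{1/d_e}. Let ℳ_{Q_0}^e be the maximal cubes of ∪_{e'} ℐ_{Q_0}^{e'} that lie in ℐ_{Q_0}^e. Then ∑_{Q∈ℳ_{Q_0}^e} |Q| ≤ |Q_0|/(2|E|) for each e, and hence the union ℳ_{Q_0} of all maximal cubes satisfies ∑_{Q∈ℳ_{Q_0}} |Q| ≤ |Q_0|/2. -/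

import Mathlib

open MeasureTheory

/-- A dyadic cube `∏_{i=1}^r [2^k l_i, 2^k (l_i + 1))` in `ℝ^r`. -/
structure DyadicCube (r : ℕ) where
  k : ℤ
  l : Fin r → ℤ
deriving DecidableEq

namespace DyadicCube

/-- The subset of `ℝ^r` represented by a dyadic cube. -/
def toSet {r : ℕ} (Q : DyadicCube r) : Set (Fin r → ℝ) :=
  Set.univ.pi fun i => Set.Ico ((2 : ℝ) ^ Q.k * Q.l i) ((2 : ℝ) ^ Q.k * (Q.l i + 1))

/-- The Lebesgue measure `|Q| = (2^k)^r` of a dyadic cube. -/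
noncomputable def vol {r : ℕ} (Q : DyadicCube r) : ℝ := ((2 : ℝ) ^ Q.k) ^ r

/-- Inclusion of dyadic cubes. -/
def sub {r : ℕ} (Q Q' : DyadicCube r) : Prop := Q.toSet ⊆ Q'.toSet

/-- The dyadic parent of a dyadic cube. -/
def parent {r : ℕ} (Q : DyadicCube r) : DyadicCube r :=
  ⟨Q.k + 1, fun i => Int.fdiv (Q.l i) 2⟩

/-- The `2^r` dyadic children of a dyadic cube, indexed by `ε : Fin r → Bool`. -/
def child {r : ℕ} (Q : DyadicCube r) (ε : Fin r → Bool) : DyadicCube r :=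
  ⟨Q.k - 1, fun i => 2 * Q.l i + (if ε i then 1 else 0)⟩

/-- The leaves of a finite tree `T` of dyadic cubes: cubes not in `T` whose parent is in `T`. -/
def leaves {r : ℕ} (T : Finset (DyadicCube r)) : Finset (DyadicCube r) :=
  (T.biUnion fun Q => Finset.univ.image Q.child).filter fun Q' => Q' ∉ T

end DyadicCube

namespace Stmt15Aux

lemma dyadic_Ico_subset (k : ℤ) (m : ℕ) (l l' : ℤ) (x : ℝ)
    (h1 : x ∈ Set.Ico ((2:ℝ)^k * l) ((2:ℝ)^k * (l+1)))
    (h2 : x ∈ Set.Ico ((2:ℝ)^(k + (m:ℤ)) * l') ((2:ℝ)^(k + (m:ℤ)) * (l'+1))) :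
    Set.Ico ((2:ℝ)^k * l) ((2:ℝ)^k * (l+1)) ⊆
      Set.Ico ((2:ℝ)^(k + (m:ℤ)) * l') ((2:ℝ)^(k + (m:ℤ)) * (l'+1)) := by
  have ha : (0:ℝ) < (2:ℝ)^k := by positivity
  have hpow : (2:ℝ)^(k + (m:ℤ)) = (2:ℝ)^k * ((2^m : ℤ) : ℝ) := by
    rw [zpow_add₀ (two_ne_zero) k (m:ℤ), zpow_natCast]
    push_cast; ring
  obtain ⟨h1a, h1b⟩ := h1
  obtain ⟨h2a, h2b⟩ := h2
  rw [hpow] at h2a h2b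
  have k1 : ((2:ℝ)^k) * (((2^m : ℤ):ℝ) * l') < ((2:ℝ)^k) * ((l:ℝ) + 1) := by
    calc ((2:ℝ)^k) * (((2^m : ℤ):ℝ) * l') = ((2:ℝ)^k * ((2^m : ℤ):ℝ)) * l' := by ring
      _ ≤ x := h2a
      _ < (2:ℝ)^k * ((l:ℝ)+1) := h1b
  have k2 : ((2:ℝ)^k) * (l:ℝ) < ((2:ℝ)^k) * (((2^m : ℤ):ℝ) * ((l':ℝ)+1)) := by
    calc ((2:ℝ)^k) * (l:ℝ) ≤ x := h1a
      _ < ((2:ℝ)^k * ((2^m : ℤ):ℝ)) * ((l':ℝ)+1) := h2b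
      _ = ((2:ℝ)^k) * (((2^m : ℤ):ℝ) * ((l':ℝ)+1)) := by ring
  have k1' : (2^m * l' : ℤ) < l + 1 := by
    have := (mul_lt_mul_iff_right₀ ha).mp k1
    exact_mod_cast this
  have k2' : (l : ℤ) < 2^m * (l'+1) := by
    have := (mul_lt_mul_iff_right₀ ha).mp k2
    exact_mod_cast this
  have k1'' : ((2^m * l' : ℤ) : ℝ) ≤ (l:ℝ) := by
    exact_mod_cast Int.lt_add_one_iff.mp k1'
  have k2'' : ((l:ℝ) + 1) ≤ ((2^m * (l'+1) : ℤ) : ℝ) := by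
    exact_mod_cast Int.lt_iff_add_one_le.mp k2'
  intro y hy
  obtain ⟨hy1, hy2⟩ := hy
  rw [Set.mem_Ico, hpow]
  constructor
  · calc ((2:ℝ)^k * ((2^m:ℤ):ℝ)) * (l':ℝ) = (2:ℝ)^k * (((2^m * l' : ℤ)):ℝ) := by
          push_cast; ring
      _ ≤ (2:ℝ)^k * (l:ℝ) := mul_le_mul_of_nonneg_left k1'' ha.le
      _ ≤ y := hy1
  · calc y < (2:ℝ)^k * ((l:ℝ)+1) := hy2
      _ ≤ (2:ℝ)^k * (((2^m*(l'+1) : ℤ)):ℝ) := mul_le_mul_of_nonneg_left k2'' ha.le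
      _ = ((2:ℝ)^k * ((2^m:ℤ):ℝ)) * ((l':ℝ)+1) := by push_cast; ring

lemma mem_toSet {r : ℕ} {Q : DyadicCube r} {x : Fin r → ℝ} :
    x ∈ Q.toSet ↔ ∀ i, x i ∈ Set.Ico ((2:ℝ)^Q.k * Q.l i) ((2:ℝ)^Q.k * (Q.l i + 1)) :=
  Set.mem_univ_pi

lemma measurableSet_toSet {r : ℕ} (Q : DyadicCube r) : MeasurableSet Q.toSet :=
  MeasurableSet.univ_pi fun _ => measurableSet_Ico

lemma vol_pos {r : ℕ} (Q : DyadicCube r) : 0 < Q.vol := by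
  unfold DyadicCube.vol; positivity

lemma sub_of_mem_of_le {r : ℕ} {Q Q' : DyadicCube r} (hk : Q.k ≤ Q'.k)
    {x : Fin r → ℝ} (hx : x ∈ Q.toSet) (hx' : x ∈ Q'.toSet) : Q.sub Q' := by
  obtain ⟨m, hm⟩ : ∃ m : ℕ, Q'.k = Q.k + (m:ℤ) :=
    ⟨(Q'.k - Q.k).toNat, by omega⟩
  intro y hy
  rw [mem_toSet] at hx hx' hy ⊢
  intro i
  have hx'i := hx' i
  rw [hm] at hx'i ⊢
  exact dyadic_Ico_subset Q.k m (Q.l i) (Q'.l i) (x i) (hx i) hx'i (hy i)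

lemma sub_or_sub_of_inter {r : ℕ} {Q Q' : DyadicCube r}
    (h : ¬ Disjoint Q.toSet Q'.toSet) : Q.sub Q' ∨ Q'.sub Q := by
  obtain ⟨x, hx, hx'⟩ := Set.not_disjoint_iff.mp h
  rcases le_total Q.k Q'.k with hk | hk
  · exact Or.inl (sub_of_mem_of_le hk hx hx')
  · exact Or.inr (sub_of_mem_of_le hk hx' hx)

end Stmt15Aux

open Stmt15Aux in
/-- Stopping-time bound: with `M = log₂(2|E|)/min_e d_e`, `ℐ_{Q_0}^e` the dyadic subcubes
`Q ⊆ Q_0` with `[F_e^{d_e}]_Q^{1/d_e} > 2^M [F_e^{d_e}]_{Q_0}^{1/d_e}`, and `ℳ_{Q_0}` the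
maximal cubes of `⋃_e ℐ_{Q_0}^e`, one has `∑_{Q ∈ ℳ_{Q_0} ∩ ℐ_{Q_0}^e} |Q| ≤ |Q_0|/(2|E|)`
for each `e`, and `∑_{Q ∈ ℳ_{Q_0}} |Q| ≤ |Q_0|/2` (tested on finite subfamilies). -/
theorem stmt15 {r : ℕ} (hr : 0 < r) {E : Type*} [Fintype E] (hE : Nonempty E)
    (d : E → ℝ) (hd : ∀ e, 1 ≤ d e)
    (F : E → (Fin r → ℝ) → ℝ) (hFmeas : ∀ e, Measurable (F e))
    (hFpos : ∀ e x, 0 ≤ F e x) (Q0 : DyadicCube r)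
    (hFint : ∀ e, IntegrableOn (fun x => F e x ^ d e) Q0.toSet) :
    let M : ℝ := Real.logb 2 (2 * Fintype.card E) /
      (Finset.univ.inf' (Finset.univ_nonempty_iff.mpr hE) fun e => d e)
    let avg : E → DyadicCube r → ℝ := fun e Q =>
      (Q.vol⁻¹ * ∫ x in Q.toSet, F e x ^ d e) ^ (d e)⁻¹
    let I : E → Set (DyadicCube r) := fun e =>
      {Q | Q.sub Q0 ∧ (2 : ℝ) ^ M * avg e Q0 < avg e Q}
    let Mx : Set (DyadicCube r) :=
      {Q | (∃ e, Q ∈ I e) ∧ ∀ Q', (∃ e, Q' ∈ I e) → Q.sub Q' → Q = Q'}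
    (∀ e, ∀ S : Finset (DyadicCube r), (∀ Q ∈ S, Q ∈ Mx ∧ Q ∈ I e) →
        ∑ Q ∈ S, Q.vol ≤ Q0.vol / (2 * Fintype.card E))
    ∧ (∀ S : Finset (DyadicCube r), (∀ Q ∈ S, Q ∈ Mx) →
        ∑ Q ∈ S, Q.vol ≤ Q0.vol / 2) := by
  intro M avg I Mx
  classical
  have hcard : (0:ℝ) < Fintype.card E := by
    exact_mod_cast Fintype.card_pos
  have hvolQ0 : 0 < Q0.vol := vol_pos Q0
  -- the minimum of the exponents
  set δ : ℝ := Finset.univ.inf' (Finset.univ_nonempty_iff.mpr hE) (fun e => d e) with hδdef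
  have hδ1 : 1 ≤ δ := Finset.le_inf' _ _ fun e _ => hd e
  have hδpos : 0 < δ := lt_of_lt_of_le one_pos hδ1
  have hδle : ∀ e, δ ≤ d e := fun e => Finset.inf'_le _ (Finset.mem_univ e)
  have hMδ : M * δ = Real.logb 2 (2 * Fintype.card E) := by
    show Real.logb 2 (2 * Fintype.card E) / δ * δ = _
    field_simp
  have hM0 : 0 ≤ M := by
    apply div_nonneg _ hδpos.le
    apply Real.logb_nonneg one_lt_two
    have : (1:ℝ) ≤ (Fintype.card E : ℝ) := by exact_mod_cast Fintype.card_pos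
    linarith
  -- key estimate, part 1
  have key : ∀ e, ∀ S : Finset (DyadicCube r), (∀ Q ∈ S, Q ∈ Mx ∧ Q ∈ I e) →
      ∑ Q ∈ S, Q.vol ≤ Q0.vol / (2 * Fintype.card E) := by
    intro e S hS
    have hde : 0 < d e := lt_of_lt_of_le one_pos (hd e)
    set B : ℝ := Q0.vol⁻¹ * ∫ x in Q0.toSet, F e x ^ d e with hBdef
    have hintQ0 : 0 ≤ ∫ x in Q0.toSet, F e x ^ d e :=
      setIntegral_nonneg (measurableSet_toSet Q0) fun x _ => Real.rpow_nonneg (hFpos e x) _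
    have hB0 : 0 ≤ B := mul_nonneg (by positivity) hintQ0
    set c : ℝ := (2:ℝ) ^ (M * d e) with hcdef
    have hcpos : 0 < c := Real.rpow_pos_of_pos two_pos _
    have hcge : 2 * (Fintype.card E : ℝ) ≤ c := by
      have h1 : Real.logb 2 (2 * Fintype.card E) ≤ M * d e := by
        calc Real.logb 2 (2 * Fintype.card E) = M * δ := hMδ.symm
          _ ≤ M * d e := mul_le_mul_of_nonneg_left (hδle e) hM0
      calc 2 * (Fintype.card E : ℝ)
          = (2:ℝ) ^ Real.logb 2 (2 * Fintype.card E) :=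
            (Real.rpow_logb two_pos (by norm_num) (by positivity)).symm
        _ ≤ c := Real.rpow_le_rpow_of_exponent_le one_le_two h1
    -- per-cube estimate
    have percube : ∀ Q ∈ S, Q.vol * (c * B) < ∫ x in Q.toSet, F e x ^ d e := by
      intro Q hQ
      obtain ⟨hsub, hlt⟩ := (hS Q hQ).2
      have hvolQ : 0 < Q.vol := vol_pos Q
      set A : ℝ := Q.vol⁻¹ * ∫ x in Q.toSet, F e x ^ d e with hAdef
      have hA0 : 0 ≤ A := mul_nonneg (by positivity)
        (setIntegral_nonneg (measurableSet_toSet Q) fun x _ => Real.rpow_nonneg (hFpos e x) _)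
      have hlt' : (2:ℝ) ^ M * B ^ (d e)⁻¹ < A ^ (d e)⁻¹ := hlt
      have hraised : ((2:ℝ) ^ M * B ^ (d e)⁻¹) ^ (d e) < (A ^ (d e)⁻¹) ^ (d e) :=
        Real.rpow_lt_rpow (by positivity) hlt' hde
      rw [Real.rpow_inv_rpow hA0 hde.ne'] at hraised
      rw [Real.mul_rpow (by positivity) (by positivity),
        Real.rpow_inv_rpow hB0 hde.ne'] at hraised
      have hcB : c * B < A := by
        rw [hcdef, Real.rpow_mul (by norm_num : (0:ℝ) ≤ 2)]
        exact hraised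
      have : Q.vol * (c * B) < Q.vol * A := (mul_lt_mul_iff_right₀ hvolQ).mpr hcB
      calc Q.vol * (c * B) < Q.vol * A := this
        _ = ∫ x in Q.toSet, F e x ^ d e := by
            rw [hAdef]; field_simp
    -- pairwise disjointness
    have hdisj : Set.Pairwise ↑S (Function.onFun Disjoint fun Q : DyadicCube r => Q.toSet) := by
      intro Q hQ Q' hQ' hne
      by_contra hnd
      rcases sub_or_sub_of_inter hnd with h | h
      · exact hne (((hS Q hQ).1).2 Q' ((hS Q' hQ').1).1 h)
      · exact hne ((((hS Q' hQ').1).2 Q ((hS Q hQ).1).1 h).symm)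
    -- sum of integrals bounded by integral over Q0
    have hunionsub : (⋃ Q ∈ S, Q.toSet) ⊆ Q0.toSet :=
      Set.iUnion₂_subset fun Q hQ => (hS Q hQ).2.1
    have hsum : ∑ Q ∈ S, ∫ x in Q.toSet, F e x ^ d e
        = ∫ x in (⋃ Q ∈ S, Q.toSet), F e x ^ d e :=
      (integral_biUnion_finset S (fun Q _ => measurableSet_toSet Q) hdisj
        (fun Q hQ => (hFint e).mono_set (hS Q hQ).2.1)).symm
    have hmono : ∫ x in (⋃ Q ∈ S, Q.toSet), F e x ^ d e
        ≤ ∫ x in Q0.toSet, F e x ^ d e := by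
      apply setIntegral_mono_set (hFint e)
        (Filter.Eventually.of_forall fun x => Real.rpow_nonneg (hFpos e x) _)
        (HasSubset.Subset.eventuallyLE hunionsub)
    have htotal : (∑ Q ∈ S, Q.vol) * (c * B) ≤ Q0.vol * B := by
      calc (∑ Q ∈ S, Q.vol) * (c * B) = ∑ Q ∈ S, Q.vol * (c * B) := Finset.sum_mul _ _ _
        _ ≤ ∑ Q ∈ S, ∫ x in Q.toSet, F e x ^ d e :=
            Finset.sum_le_sum fun Q hQ => (percube Q hQ).le
        _ ≤ ∫ x in Q0.toSet, F e x ^ d e := hsum ▸ hmono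
        _ = Q0.vol * B := by rw [hBdef]; field_simp
    have hSsum0 : 0 ≤ ∑ Q ∈ S, Q.vol := Finset.sum_nonneg fun Q _ => (vol_pos Q).le
    rcases eq_or_lt_of_le hB0 with hBz | hBpos
    · -- B = 0: then S must be empty
      have hSempty : S = ∅ := by
        by_contra hne
        obtain ⟨Q, hQ⟩ := Finset.nonempty_iff_ne_empty.mpr hne
        have h1 := percube Q hQ
        rw [← hBz] at h1
        simp only [mul_zero] at h1
        have h2 : ∫ x in Q.toSet, F e x ^ d e ≤ ∫ x in Q0.toSet, F e x ^ d e := by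
          apply setIntegral_mono_set (hFint e)
            (Filter.Eventually.of_forall fun x => Real.rpow_nonneg (hFpos e x) _)
            (HasSubset.Subset.eventuallyLE (hS Q hQ).2.1)
        have h3 : ∫ x in Q0.toSet, F e x ^ d e = 0 := by
          have : Q0.vol * B = 0 := by rw [← hBz]; ring
          rw [hBdef] at this
          field_simp at this
          exact this
        linarith
      rw [hSempty]
      simp only [Finset.sum_empty]
      positivity
    · -- B > 0
      have h1 : (∑ Q ∈ S, Q.vol) * c ≤ Q0.vol := by
        have := htotal
        nlinarith
      rw [le_div_iff₀ (by positivity)]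
      nlinarith
  refine ⟨key, ?_⟩
  intro S hS
  have hf : ∀ Q ∈ S, ∃ e, Q ∈ I e := fun Q hQ => (hS Q hQ).1
  set f : DyadicCube r → E := fun Q =>
    if h : ∃ e, Q ∈ I e then h.choose else Classical.arbitrary E with hfdef
  have hfI : ∀ Q ∈ S, Q ∈ I (f Q) := by
    intro Q hQ
    simp only [hfdef, dif_pos (hf Q hQ)]
    exact (hf Q hQ).choose_spec
  have hfib := Finset.sum_fiberwise S f (fun Q => Q.vol)
  calc ∑ Q ∈ S, Q.vol
      = ∑ e : E, ∑ Q ∈ S.filter (fun Q => f Q = e), Q.vol := hfib.symm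
    _ ≤ ∑ _e : E, Q0.vol / (2 * Fintype.card E) := by
        apply Finset.sum_le_sum
        intro e _
        apply key e
        intro Q hQ
        rw [Finset.mem_filter] at hQ
        exact ⟨hS Q hQ.1, hQ.2 ▸ hfI Q hQ.1⟩
    _ = Q0.vol / 2 := by
        rw [Finset.sum_const, Finset.card_univ, nsmul_eq_mul]
        field_simp
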